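/- Let n > 1 and c > n. Setting γ = sqrt((c−n)/c), the quantity λ_cut(c) = sqrt(1/8)·sqrt(8c² + 20cn − n² − 8c·sqrt(n²+8cn) − n·sqrt(n²+8cn)) satisfies the asymptotic expansion λ_cut = (2/(3√3))·n·γ³ + O(γ⁵) as γ → 0. -/

import Mathlib

open Filter Asymptotics

noncomputable def Tfun : ℝ → ℝ := fun x => 27 - 18*x - x^2 + Real.sqrt ((9-x)^3*(1-x))

noncomputable def Ffun : ℝ → ℝ := fun x => Real.sqrt 8 / ((1-x) * Real.sqrt (Tfun x))

lemma Tfun_pos {x : ℝ} (hx0 : 0 ≤ x) (hx1 : x < 1) : 0 < Tfun x := by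
  have h := Real.sqrt_nonneg ((9-x)^3*(1-x))
  unfold Tfun
  nlinarith

lemma F0 : Ffun 0 = 2 / (3 * Real.sqrt 3) := by
  have h729 : Real.sqrt ((9-(0:ℝ))^3*(1-0)) = 27 := by
    rw [show ((9-(0:ℝ))^3*(1-0)) = 27^2 by norm_num]
    exact Real.sqrt_sq (by norm_num)
  have hT : Tfun 0 = 54 := by unfold Tfun; rw [h729]; norm_num
  have h54 : Real.sqrt 54 = Real.sqrt 2 * (3 * Real.sqrt 3) := by
    rw [show (54:ℝ) = 2 * (9 * 3) by norm_num, Real.sqrt_mul (by norm_num),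
      Real.sqrt_mul (by norm_num) 3, show Real.sqrt 9 = 3 by
        rw [show (9:ℝ) = 3^2 by norm_num]; exact Real.sqrt_sq (by norm_num)]
  have h8 : Real.sqrt 8 = 2 * Real.sqrt 2 := by
    rw [show (8:ℝ) = 4 * 2 by norm_num, Real.sqrt_mul (by norm_num),
      show Real.sqrt 4 = 2 by
        rw [show (4:ℝ) = 2^2 by norm_num]; exact Real.sqrt_sq (by norm_num)]
  have h2 : Real.sqrt 2 ≠ 0 := by positivity
  have h3 : Real.sqrt 3 ≠ 0 := by positivity
  unfold Ffun
  rw [hT, h54, h8]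
  field_simp
  ring

lemma diffF : DifferentiableAt ℝ Ffun 0 := by
  have hpoly : DifferentiableAt ℝ (fun x : ℝ => (9-x)^3*(1-x)) 0 := by fun_prop
  have hS : DifferentiableAt ℝ (fun x : ℝ => Real.sqrt ((9-x)^3*(1-x))) 0 :=
    hpoly.sqrt (by norm_num)
  have hT : DifferentiableAt ℝ Tfun 0 := by
    unfold Tfun; fun_prop
  have hT0 : Tfun 0 ≠ 0 := (Tfun_pos le_rfl one_pos).ne'
  have hsT : DifferentiableAt ℝ (fun x => Real.sqrt (Tfun x)) 0 := hT.sqrt hT0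
  have hden : DifferentiableAt ℝ (fun x : ℝ => (1-x) * Real.sqrt (Tfun x)) 0 := by
    fun_prop
  have hden0 : (1-(0:ℝ)) * Real.sqrt (Tfun 0) ≠ 0 := by
    have := Real.sqrt_pos.2 (Tfun_pos le_rfl one_pos)
    positivity
  exact (differentiableAt_const _).div hden hden0

lemma main_eq (n : ℝ) (hn : 0 < n) (γ : ℝ) (hγ : γ ∈ Set.Ioo (0:ℝ) 1) :
    Real.sqrt (1 / 8) *
      Real.sqrt (8 * (n / (1 - γ ^ 2)) ^ 2 + 20 * (n / (1 - γ ^ 2)) * n - n ^ 2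
        - 8 * (n / (1 - γ ^ 2)) * Real.sqrt (n ^ 2 + 8 * (n / (1 - γ ^ 2)) * n)
        - n * Real.sqrt (n ^ 2 + 8 * (n / (1 - γ ^ 2)) * n))
      = n * γ ^ 3 * Ffun (γ ^ 2) := by
  obtain ⟨hγ0, hγ1⟩ := hγ
  set x := γ ^ 2 with hxdef
  have hx0 : 0 < x := by positivity
  have hx1 : x < 1 := by nlinarith
  have h1x : (0:ℝ) < 1 - x := by linarith
  have h9x : (0:ℝ) < 9 - x := by linarith
  set s1 := Real.sqrt (1 - x) with hs1def
  set s9 := Real.sqrt (9 - x) with hs9def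
  have hs1 : s1 ^ 2 = 1 - x := Real.sq_sqrt h1x.le
  have hs9 : s9 ^ 2 = 9 - x := Real.sq_sqrt h9x.le
  have hs1pos : 0 < s1 := Real.sqrt_pos.2 h1x
  have hs9pos : 0 < s9 := Real.sqrt_pos.2 h9x
  have hinner : Real.sqrt (n ^ 2 + 8 * (n / (1 - x)) * n) = n * s9 / s1 := by
    rw [show n ^ 2 + 8 * (n / (1 - x)) * n = (n * s9 / s1) ^ 2 by
      rw [div_pow, mul_pow, hs9, hs1]; field_simp; ring]
    exact Real.sqrt_sq (by positivity)
  have hS : Real.sqrt ((9-x)^3*(1-x)) = (9-x) * s9 * s1 := by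
    rw [show (9-x)^3*(1-x) = ((9-x) * s9 * s1)^2 by
      rw [mul_pow, mul_pow, hs9, hs1]; ring]
    exact Real.sqrt_sq (by positivity)
  have hT : Tfun x = 27 - 18*x - x^2 + (9-x) * s9 * s1 := by
    unfold Tfun; rw [hS]
  have hTpos : 0 < Tfun x := Tfun_pos hx0.le hx1
  have hsTpos : 0 < Real.sqrt (Tfun x) := Real.sqrt_pos.2 hTpos
  have hsT : (Real.sqrt (Tfun x))^2 = Tfun x := Real.sq_sqrt hTpos.le
  have key : (27 - 18*x - x^2 - (9-x)*s9*s1) * (27 - 18*x - x^2 + (9-x)*s9*s1)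
      = 64 * x^3 := by
    have hB : ((9-x)*s9*s1)^2 = (9-x)^3*(1-x) := by
      rw [mul_pow, mul_pow, hs9, hs1]; ring
    linear_combination -hB
  have hFpos : 0 ≤ n * γ ^ 3 * Ffun x := by
    have : 0 < Ffun x := by
      unfold Ffun
      positivity
    positivity
  have hEq : 8 * (n / (1 - x)) ^ 2 + 20 * (n / (1 - x)) * n - n ^ 2
        - 8 * (n / (1 - x)) * (n * s9 / s1) - n * (n * s9 / s1)
      = 8 * (n * γ ^ 3 * Ffun x)^2 := by
    have hF2 : (Ffun x)^2 = 8 / ((1-x)^2 * Tfun x) := by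
      unfold Ffun
      rw [div_pow, mul_pow, hsT, Real.sq_sqrt (by norm_num : (0:ℝ) ≤ 8)]
    rw [mul_pow, mul_pow, hF2]
    have hγ6 : (γ^3)^2 = x^3 := by rw [hxdef]; ring
    rw [hγ6, hT]
    have hdiv : n * s9 / s1 = n * s9 * s1 / (1 - x) := by
      rw [div_eq_div_iff hs1pos.ne' h1x.ne']
      linear_combination (-(n * s9)) * hs1
    have hA : 8 * (n / (1 - x)) ^ 2 + 20 * (n / (1 - x)) * n - n ^ 2
        - 8 * (n / (1 - x)) * (n * s9 / s1) - n * (n * s9 / s1)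
        = n^2 * (27 - 18*x - x^2 - (9-x)*s9*s1) / (1-x)^2 := by
      rw [hdiv]
      field_simp
      ring
    have hT'pos : 0 < 27 - 18*x - x^2 + (9-x)*s9*s1 := hT ▸ hTpos
    rw [hA,
      show 8 * (n^2 * x^3 * (8 / ((1-x)^2 * (27 - 18*x - x^2 + (9-x)*s9*s1))))
        = 64*n^2*x^3 / ((1-x)^2 * (27 - 18*x - x^2 + (9-x)*s9*s1)) by ring,
      div_eq_div_iff (by positivity) (mul_pos (pow_pos h1x 2) hT'pos).ne']
    linear_combination ((1-x)^2 * n^2) * key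
  rw [hinner, hEq, ← Real.sqrt_mul (by norm_num : (0:ℝ) ≤ 1/8),
    show 1/8 * (8 * (n * γ ^ 3 * Ffun x)^2) = (n * γ ^ 3 * Ffun x)^2 by ring,
    Real.sqrt_sq hFpos]

theorem lambda_cut_expansion (n : ℝ) (hn : 1 < n) :
    (fun γ : ℝ =>
        Real.sqrt (1 / 8) *
          Real.sqrt (8 * (n / (1 - γ ^ 2)) ^ 2 + 20 * (n / (1 - γ ^ 2)) * n - n ^ 2
            - 8 * (n / (1 - γ ^ 2)) *
                Real.sqrt (n ^ 2 + 8 * (n / (1 - γ ^ 2)) * n)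
            - n * Real.sqrt (n ^ 2 + 8 * (n / (1 - γ ^ 2)) * n))
        - (2 / (3 * Real.sqrt 3)) * n * γ ^ 3)
      =O[nhdsWithin 0 (Set.Ioo (0 : ℝ) 1)] (fun γ : ℝ => γ ^ 5) := by
  have hn0 : (0:ℝ) < n := by linarith
  set l := nhdsWithin (0:ℝ) (Set.Ioo (0 : ℝ) 1) with hl
  have htend : Tendsto (fun γ : ℝ => γ ^ 2) l (nhds 0) := by
    have : Tendsto (fun γ : ℝ => γ ^ 2) (nhds 0) (nhds ((0:ℝ)^2)) :=
      (continuous_pow 2).tendsto 0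
    simpa using this.mono_left nhdsWithin_le_nhds
  have hder := (diffF.hasFDerivAt.isBigO_sub).comp_tendsto htend
  -- hder : (fun γ => Ffun (γ^2) - Ffun 0) =O[l] fun γ => γ^2 - 0
  have h2 : (fun γ : ℝ => Ffun (γ^2) - Ffun 0) =O[l] (fun γ : ℝ => γ^2) := by
    simpa [Function.comp_def] using hder
  have h3 : (fun γ : ℝ => n * γ^3) =O[l] (fun γ : ℝ => γ^3) :=
    (isBigO_refl (fun γ : ℝ => γ^3) l).const_mul_left n
  have h4 : (fun γ : ℝ => n * γ^3 * (Ffun (γ^2) - Ffun 0)) =O[l]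
      (fun γ : ℝ => γ^5) := by
    have := h3.mul h2
    simpa [← pow_add] using this
  refine h4.congr' ?_ EventuallyEq.rfl
  filter_upwards [self_mem_nhdsWithin] with γ hγ
  rw [main_eq n hn0 γ hγ, F0]
  ring
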